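/- Let A be an n×n slack matrix of a pointed full-dimensional polyhedral cone in R^d with A = X X^T, X ∈ R^{n×d}, rank(X) = d. Define W₁ = {X Q X^T : Q ∈ S^d} and W₂ = {Y ∈ S^n : Y_{ij} = 0 whenever A_{ij} = 0}. Then every B ∈ W₁ ∩ W₂ has each row a scalar multiple of the corresponding row of A. -/

import Mathlib

open Matrix Pointwise

/-- The Euclidean dual cone of `K ⊆ ℝ^d`. -/
def eucDual {d : ℕ} (K : Set (Fin d → ℝ)) : Set (Fin d → ℝ) :=
  {y | ∀ x ∈ K, 0 ≤ x ⬝ᵥ y}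

/-- A polyhedral cone: nonnegative combinations of finitely many vectors. -/
def IsPolyhedralCone {d : ℕ} (K : Set (Fin d → ℝ)) : Prop :=
  ∃ (n : ℕ) (v : Fin n → (Fin d → ℝ)),
    K = {x | ∃ c : Fin n → ℝ, (∀ i, 0 ≤ c i) ∧ x = ∑ i, c i • v i}

/-- The convex cone generated by the vectors `v 0, …, v (n-1)`. -/
def coneGenBy {n : ℕ} {V : Type*} [AddCommMonoid V] [Module ℝ V] (v : Fin n → V) : Set V :=
  {x | ∃ c : Fin n → ℝ, (∀ i, 0 ≤ c i) ∧ x = ∑ i, c i • v i}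

/-- `r` generates an extreme ray of the cone `K`. -/
def IsExtremeRayGen {d : ℕ} (K : Set (Fin d → ℝ)) (r : Fin d → ℝ) : Prop :=
  r ≠ 0 ∧ r ∈ K ∧
    ∀ x ∈ K, ∀ y ∈ K, (∃ c : ℝ, 0 ≤ c ∧ x + y = c • r) →
      (∃ a : ℝ, 0 ≤ a ∧ x = a • r) ∧ (∃ b : ℝ, 0 ≤ b ∧ y = b • r)

/-- The family `v` consists of generators of the distinct extreme rays of `K`,
one generator per extreme ray, covering all extreme rays of `K`. -/
def GensDistinctExtremeRays {d n : ℕ} (K : Set (Fin d → ℝ))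
    (v : Fin n → (Fin d → ℝ)) : Prop :=
  (∀ i, IsExtremeRayGen K (v i)) ∧
  (∀ i j, i ≠ j → ∀ c : ℝ, v i ≠ c • v j) ∧
  (∀ r, IsExtremeRayGen K r → ∃ i, ∃ c : ℝ, 0 < c ∧ r = c • v i)

/-- `M` is a slack matrix of the cone `K`: `M i j = ⟨x i, y j⟩` where the `x i`
generate the distinct extreme rays of `K` and the `y j` generate the distinct
extreme rays of the (Euclidean) dual cone of `K`. -/
def IsSlackMatrix {d n m : ℕ} (M : Matrix (Fin n) (Fin m) ℝ)
    (K : Set (Fin d → ℝ)) : Prop :=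
  ∃ (x : Fin n → (Fin d → ℝ)) (y : Fin m → (Fin d → ℝ)),
    GensDistinctExtremeRays K x ∧ GensDistinctExtremeRays (eucDual K) y ∧
    ∀ i j, M i j = x i ⬝ᵥ y j


lemma farkasAux {d : ℕ} : ∀ (m : ℕ) (v : Fin m → (Fin d → ℝ)) (x : Fin d → ℝ),
    x ∉ coneGenBy v → ∃ y : Fin d → ℝ, (∀ a, 0 ≤ v a ⬝ᵥ y) ∧ x ⬝ᵥ y < 0 := by
  intro m
  induction m with
  | zero =>
    intro v x hx
    have hx0 : x ≠ 0 := by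
      rintro rfl; exact hx ⟨0, fun i => le_refl 0, by simp⟩
    refine ⟨-x, fun a => a.elim0, ?_⟩
    have hnn : 0 ≤ x ⬝ᵥ x := Fintype.sum_nonneg fun i => mul_self_nonneg (x i)
    have : 0 < x ⬝ᵥ x := lt_of_le_of_ne hnn (fun h => hx0 (dotProduct_self_eq_zero.mp h.symm))
    simpa [dotProduct_neg] using neg_neg_iff_pos.mpr this
  | succ m ih =>
    intro v x hx
    set v' : Fin m → (Fin d → ℝ) := fun a => v a.castSucc with hv'
    have hx' : x ∉ coneGenBy v' := by
      rintro ⟨c, hc, rfl⟩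
      refine hx ⟨Fin.snoc c 0, ?_, ?_⟩
      · intro i
        refine Fin.lastCases ?_ ?_ i
        · simp [Fin.snoc_last]
        · intro j; simpa [Fin.snoc_castSucc] using hc j
      · rw [Fin.sum_univ_castSucc]
        simp [Fin.snoc_castSucc, Fin.snoc_last, hv']
    obtain ⟨y, hy, hxy⟩ := ih v' x hx'
    by_cases hlast : 0 ≤ v (Fin.last m) ⬝ᵥ y
    · refine ⟨y, ?_, hxy⟩
      intro a
      refine Fin.lastCases hlast (fun j => hy j) a
    push_neg at hlast
    set L := v (Fin.last m) with hL
    set u : Fin m → (Fin d → ℝ) := fun a => v' a - (v' a ⬝ᵥ y / (L ⬝ᵥ y)) • L with hu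
    set x' : Fin d → ℝ := x - (x ⬝ᵥ y / (L ⬝ᵥ y)) • L with hx'def
    have hLy : L ⬝ᵥ y ≠ 0 := ne_of_lt hlast
    have hx'mem : x' ∉ coneGenBy u := by
      rintro ⟨c, hc, hsum⟩
      set μ : ℝ := x ⬝ᵥ y / (L ⬝ᵥ y) - ∑ a, c a * (v' a ⬝ᵥ y / (L ⬝ᵥ y)) with hμ
      have hμ0 : 0 ≤ μ := by
        have h1 : 0 < x ⬝ᵥ y / (L ⬝ᵥ y) := div_pos_of_neg_of_neg hxy hlast
        have h2 : ∀ a, c a * (v' a ⬝ᵥ y / (L ⬝ᵥ y)) ≤ 0 := by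
          intro a
          apply mul_nonpos_of_nonneg_of_nonpos (hc a)
          exact div_nonpos_of_nonneg_of_nonpos (hy a) (le_of_lt hlast)
        have h3 : ∑ a, c a * (v' a ⬝ᵥ y / (L ⬝ᵥ y)) ≤ 0 :=
          Finset.sum_nonpos fun a _ => h2 a
        rw [hμ]; linarith
      apply hx
      refine ⟨Fin.snoc c μ, ?_, ?_⟩
      · intro i
        refine Fin.lastCases ?_ ?_ i
        · simpa [Fin.snoc_last] using hμ0
        · intro j; simpa [Fin.snoc_castSucc] using hc j
      · rw [Fin.sum_univ_castSucc]
        simp only [Fin.snoc_castSucc, Fin.snoc_last]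
        have hxeq : x = x' + (x ⬝ᵥ y / (L ⬝ᵥ y)) • L := by rw [hx'def]; abel
        rw [hxeq, hsum, hμ, hu]
        rw [sub_smul, Finset.sum_smul]
        simp only [smul_sub, smul_smul, Finset.sum_sub_distrib]
        abel
    obtain ⟨w, hw, hx'w⟩ := ih u x' hx'mem
    refine ⟨w - (L ⬝ᵥ w / (L ⬝ᵥ y)) • y, ?_, ?_⟩
    · intro a
      refine Fin.lastCases ?_ ?_ a
      · rw [dotProduct_sub, dotProduct_smul]
        rw [smul_eq_mul, div_mul_cancel₀ _ hLy]
        simp [hL]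
      · intro j
        have := hw j
        rw [hu] at this
        simp only [sub_dotProduct, smul_dotProduct, smul_eq_mul] at this
        rw [dotProduct_sub, dotProduct_smul, smul_eq_mul]
        calc 0 ≤ v' j ⬝ᵥ w - v' j ⬝ᵥ y / (L ⬝ᵥ y) * (L ⬝ᵥ w) := this
        _ = v (Fin.castSucc j) ⬝ᵥ w - L ⬝ᵥ w / (L ⬝ᵥ y) * (v (Fin.castSucc j) ⬝ᵥ y) := by
            rw [hv']; ring
    · have := hx'w
      rw [hx'def] at this
      simp only [sub_dotProduct, smul_dotProduct, smul_eq_mul] at this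
      rw [dotProduct_sub, dotProduct_smul, smul_eq_mul]
      calc x ⬝ᵥ w - L ⬝ᵥ w / (L ⬝ᵥ y) * (x ⬝ᵥ y)
          = x ⬝ᵥ w - x ⬝ᵥ y / (L ⬝ᵥ y) * (L ⬝ᵥ w) := by ring
        _ < 0 := this

lemma sum_dotProduct'' {d : ℕ} {ι : Type*} (s : Finset ι) (f : ι → (Fin d → ℝ)) (w : Fin d → ℝ) :
    (∑ i ∈ s, f i) ⬝ᵥ w = ∑ i ∈ s, f i ⬝ᵥ w := by
  simp only [dotProduct, Finset.sum_apply, Finset.sum_mul]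
  exact Finset.sum_comm

lemma coneGenBy_mem_gen {m d : ℕ} (v : Fin m → (Fin d → ℝ)) (a : Fin m) :
    v a ∈ coneGenBy v := by
  refine ⟨Pi.single a 1, ?_, ?_⟩
  · intro i
    by_cases h : i = a <;> simp [h, Pi.single_apply]
  · rw [Finset.sum_eq_single a]
    · simp
    · intro b _ hb; simp [Pi.single_apply, hb]
    · simp

lemma eucDual_coneGenBy {m d : ℕ} (v : Fin m → (Fin d → ℝ)) :
    eucDual (coneGenBy v) = {w | ∀ a, 0 ≤ v a ⬝ᵥ w} := by
  ext w
  constructor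
  · intro hw a
    exact hw (v a) (coneGenBy_mem_gen v a)
  · rintro hw x ⟨c, hc, rfl⟩
    rw [sum_dotProduct'']
    apply Finset.sum_nonneg
    intro a _
    rw [smul_dotProduct, smul_eq_mul]
    exact mul_nonneg (hc a) (hw a)

/-- Farkas / bipolar: the double dual of a finitely generated cone is itself. -/
lemma farkas_mem {m d : ℕ} (v : Fin m → (Fin d → ℝ)) (x : Fin d → ℝ)
    (h : ∀ y : Fin d → ℝ, (∀ a, 0 ≤ v a ⬝ᵥ y) → 0 ≤ x ⬝ᵥ y) :
    x ∈ coneGenBy v := by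
  by_contra hx
  obtain ⟨y, hy, hxy⟩ := farkasAux m v x hx
  exact absurd (h y hy) (not_le.mpr hxy)

/-- `u ↦ a ⬝ᵥ u` as a linear map. -/
def dotL {d : ℕ} (a : Fin d → ℝ) : (Fin d → ℝ) →ₗ[ℝ] ℝ where
  toFun u := a ⬝ᵥ u
  map_add' u v := dotProduct_add a u v
  map_smul' c u := by simp [dotProduct_smul]

/-- Minkowski: in a pointed cone given by finitely many linear inequalities, every
element is a nonnegative combination of the given representatives of the extreme rays. -/
lemma minkowski {d m n : ℕ} (v : Fin m → (Fin d → ℝ)) (y : Fin n → (Fin d → ℝ))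
    (hpt : ∀ w : Fin d → ℝ, (∀ a, 0 ≤ v a ⬝ᵥ w) → (∀ a, 0 ≤ v a ⬝ᵥ (-w)) → w = 0)
    (hcov : ∀ r, IsExtremeRayGen {w | ∀ a, 0 ≤ v a ⬝ᵥ w} r →
      ∃ j, ∃ c : ℝ, 0 < c ∧ r = c • y j) :
    ∀ (k : ℕ) (w : Fin d → ℝ), (∀ a, 0 ≤ v a ⬝ᵥ w) →
      Module.finrank ℝ (Submodule.span ℝ
        {u : Fin d → ℝ | (∀ a, 0 ≤ v a ⬝ᵥ u) ∧ ∀ a, v a ⬝ᵥ w = 0 → v a ⬝ᵥ u = 0}) ≤ k →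
      ∃ c : Fin n → ℝ, (∀ j, 0 ≤ c j) ∧ w = ∑ j, c j • y j := by
  intro k
  induction k using Nat.strong_induction_on with
  | _ k ih =>
  intro w hw hrank
  by_cases hw0 : w = 0
  · exact ⟨0, fun j => le_refl 0, by simp [hw0]⟩
  set F : (Fin d → ℝ) → Set (Fin d → ℝ) := fun w' =>
    {u : Fin d → ℝ | (∀ a, 0 ≤ v a ⬝ᵥ u) ∧ ∀ a, v a ⬝ᵥ w' = 0 → v a ⬝ᵥ u = 0} with hF
  by_cases hext : ∀ u ∈ F w, ∃ t : ℝ, u = t • w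
  · -- w generates an extreme ray
    have hray : IsExtremeRayGen {w' | ∀ a, 0 ≤ v a ⬝ᵥ w'} w := by
      refine ⟨hw0, hw, ?_⟩
      rintro p hp q hq ⟨c, hc, hpq⟩
      have hkey2 : ∀ a, v a ⬝ᵥ w = 0 → v a ⬝ᵥ p = 0 ∧ v a ⬝ᵥ q = 0 := by
        intro a ha
        have hsum : v a ⬝ᵥ p + v a ⬝ᵥ q = 0 := by
          have := congrArg (fun u => v a ⬝ᵥ u) hpq
          simp only [dotProduct_add, dotProduct_smul, smul_eq_mul] at this
          rw [this, ha, mul_zero]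
        have h1 := hp a; have h2 := hq a
        constructor <;> linarith
      have hpF : p ∈ F w := ⟨hp, fun a ha => (hkey2 a ha).1⟩
      have hqF : q ∈ F w := ⟨hq, fun a ha => (hkey2 a ha).2⟩
      obtain ⟨t, rfl⟩ := hext p hpF
      obtain ⟨s, rfl⟩ := hext q hqF
      have hts : ∀ r : ℝ, (∀ a, 0 ≤ v a ⬝ᵥ (r • w)) → 0 ≤ r := by
        intro r hr
        by_contra hrneg
        push_neg at hrneg
        have hneg : ∀ a, 0 ≤ v a ⬝ᵥ (-((-r) • w)) := by
          intro a; simpa [neg_neg] using hr a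
        have hposd : ∀ a, 0 ≤ v a ⬝ᵥ ((-r) • w) := by
          intro a
          rw [dotProduct_smul, smul_eq_mul]
          exact mul_nonneg (by linarith) (hw a)
        have := hpt ((-r) • w) hposd hneg
        have : (-r) • w = 0 := this
        rcases smul_eq_zero.mp this with h | h
        · linarith
        · exact absurd h hw0
      exact ⟨⟨t, hts t hp, rfl⟩, ⟨s, hts s hq, rfl⟩⟩
    obtain ⟨j, c, hcpos, hwc⟩ := hcov w hray
    refine ⟨Pi.single j c, ?_, ?_⟩
    · intro i
      by_cases h : i = j <;> simp [h, Pi.single_apply, le_of_lt hcpos]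
    · rw [Finset.sum_eq_single j]
      · simpa using hwc
      · intro b _ hb; simp [Pi.single_apply, hb]
      · simp
  · -- split w into two pieces in lower-dimensional faces
    push_neg at hext
    obtain ⟨z, hzF, hznot⟩ := hext
    obtain ⟨hzD, hztight⟩ := hzF
    have hwF : w ∈ F w := ⟨hw, fun a ha => ha⟩
    have hz0 : z ≠ 0 := by
      rintro rfl; exact hznot 0 (by simp)
    -- the set of constraints strictly positive on z
    have hS₁ : (Finset.univ.filter (fun a => 0 < v a ⬝ᵥ z)).Nonempty := by
      by_contra hS
      rw [Finset.not_nonempty_iff_eq_empty, Finset.filter_eq_empty_iff] at hS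
      have : ∀ a, 0 ≤ v a ⬝ᵥ (-z) := by
        intro a
        have := hS (Finset.mem_univ a)
        push_neg at this
        rw [dotProduct_neg]; linarith
      exact hz0 (hpt z hzD this)
    set S₁ := Finset.univ.filter (fun a => 0 < v a ⬝ᵥ z) with hS₁def
    set f₁ : Fin m → ℝ := fun a => -(v a ⬝ᵥ w) / (v a ⬝ᵥ z) with hf₁
    set t₁ := S₁.sup' hS₁ f₁ with ht₁
    obtain ⟨a₀, ha₀S, ha₀eq⟩ := Finset.exists_mem_eq_sup' hS₁ f₁
    have ha₀z : 0 < v a₀ ⬝ᵥ z := (Finset.mem_filter.mp ha₀S).2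
    have ha₀w : 0 < v a₀ ⬝ᵥ w := by
      rcases lt_or_eq_of_le (hw a₀) with h | h
      · exact h
      · exact absurd (hztight a₀ h.symm) (ne_of_gt ha₀z)
    have ht₁neg : t₁ < 0 := by
      rw [ht₁, ha₀eq, hf₁]
      exact div_neg_of_neg_of_pos (by linarith) ha₀z
    set w₁ := w + t₁ • z with hw₁def
    have hw₁D : ∀ a, 0 ≤ v a ⬝ᵥ w₁ := by
      intro a
      rw [hw₁def, dotProduct_add, dotProduct_smul, smul_eq_mul]
      rcases lt_trichotomy (v a ⬝ᵥ z) 0 with h | h | h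
      · nlinarith [hw a]
      · rw [h, mul_zero, add_zero]; exact hw a
      · have haS : a ∈ S₁ := Finset.mem_filter.mpr ⟨Finset.mem_univ a, h⟩
        have := Finset.le_sup' f₁ haS
        rw [← ht₁, hf₁] at this
        have : -(v a ⬝ᵥ w) / (v a ⬝ᵥ z) ≤ t₁ := this
        rw [div_le_iff₀ h] at this
        linarith
    have ha₀tight : v a₀ ⬝ᵥ w₁ = 0 := by
      rw [hw₁def, dotProduct_add, dotProduct_smul, smul_eq_mul, ht₁, ha₀eq, hf₁]
      field_simp
      ring
    -- rank drops for w₁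
    have hsub₁ : F w₁ ⊆ F w := by
      rintro u ⟨huD, hutight⟩
      refine ⟨huD, fun a ha => hutight a ?_⟩
      rw [hw₁def, dotProduct_add, dotProduct_smul, smul_eq_mul, ha, hztight a ha, mul_zero,
        add_zero]
    have hzspan : z ∈ Submodule.span ℝ (F w) := Submodule.subset_span ⟨hzD, hztight⟩
    have hznotspan₁ : z ∉ Submodule.span ℝ (F w₁) := by
      intro hmem
      have hker : Submodule.span ℝ (F w₁) ≤ LinearMap.ker (dotL (v a₀)) := by
        rw [Submodule.span_le]
        rintro u ⟨huD, hutight⟩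
        exact LinearMap.mem_ker.mpr (hutight a₀ ha₀tight)
      exact absurd (LinearMap.mem_ker.mp (hker hmem)) (ne_of_gt ha₀z)
    have hrank₁ : Module.finrank ℝ (Submodule.span ℝ (F w₁)) < k := by
      have hlt : Submodule.span ℝ (F w₁) < Submodule.span ℝ (F w) := by
        refine lt_of_le_of_ne (Submodule.span_mono hsub₁) (fun h => hznotspan₁ (h ▸ hzspan))
      exact lt_of_lt_of_le (Submodule.finrank_lt_finrank_of_lt hlt) hrank
    obtain ⟨c₁, hc₁, hw₁eq⟩ := ih _ hrank₁ w₁ hw₁D le_rfl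
    -- now the symmetric construction for z
    have hS₂ : (Finset.univ.filter (fun a => 0 < v a ⬝ᵥ w)).Nonempty := by
      by_contra hS
      rw [Finset.not_nonempty_iff_eq_empty, Finset.filter_eq_empty_iff] at hS
      have : ∀ a, 0 ≤ v a ⬝ᵥ (-w) := by
        intro a
        have := hS (Finset.mem_univ a)
        push_neg at this
        rw [dotProduct_neg]; linarith
      exact hw0 (hpt w hw this)
    set S₂ := Finset.univ.filter (fun a => 0 < v a ⬝ᵥ w) with hS₂def
    set f₂ : Fin m → ℝ := fun a => -(v a ⬝ᵥ z) / (v a ⬝ᵥ w) with hf₂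
    set s₁ := S₂.sup' hS₂ f₂ with hs₁
    obtain ⟨a₁, ha₁S, ha₁eq⟩ := Finset.exists_mem_eq_sup' hS₂ f₂
    have ha₁w : 0 < v a₁ ⬝ᵥ w := (Finset.mem_filter.mp ha₁S).2
    have hs₁nonpos : s₁ ≤ 0 := by
      rw [hs₁, ha₁eq, hf₂]
      exact div_nonpos_of_nonpos_of_nonneg (by linarith [hzD a₁]) (le_of_lt ha₁w)
    set z₁ := z + s₁ • w with hz₁def
    have hz₁D : ∀ a, 0 ≤ v a ⬝ᵥ z₁ := by
      intro a
      rw [hz₁def, dotProduct_add, dotProduct_smul, smul_eq_mul]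
      rcases lt_or_eq_of_le (hw a) with h | h
      · have haS : a ∈ S₂ := Finset.mem_filter.mpr ⟨Finset.mem_univ a, h⟩
        have hle := Finset.le_sup' f₂ haS
        rw [← hs₁, hf₂] at hle
        have : -(v a ⬝ᵥ z) / (v a ⬝ᵥ w) ≤ s₁ := hle
        rw [div_le_iff₀ h] at this
        linarith
      · rw [← h, mul_zero, add_zero]; exact hzD a
    have ha₁tight : v a₁ ⬝ᵥ z₁ = 0 := by
      rw [hz₁def, dotProduct_add, dotProduct_smul, smul_eq_mul, hs₁, ha₁eq, hf₂]
      field_simp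
      ring
    have hsub₂ : F z₁ ⊆ F w := by
      rintro u ⟨huD, hutight⟩
      refine ⟨huD, fun a ha => hutight a ?_⟩
      rw [hz₁def, dotProduct_add, dotProduct_smul, smul_eq_mul, ha, hztight a ha, mul_zero,
        zero_add]
    have hwspan : w ∈ Submodule.span ℝ (F w) := Submodule.subset_span hwF
    have hwnotspan₂ : w ∉ Submodule.span ℝ (F z₁) := by
      intro hmem
      have hker : Submodule.span ℝ (F z₁) ≤ LinearMap.ker (dotL (v a₁)) := by
        rw [Submodule.span_le]
        rintro u ⟨huD, hutight⟩
        exact LinearMap.mem_ker.mpr (hutight a₁ ha₁tight)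
      exact absurd (LinearMap.mem_ker.mp (hker hmem)) (ne_of_gt ha₁w)
    have hrank₂ : Module.finrank ℝ (Submodule.span ℝ (F z₁)) < k := by
      have hlt : Submodule.span ℝ (F z₁) < Submodule.span ℝ (F w) := by
        refine lt_of_le_of_ne (Submodule.span_mono hsub₂) (fun h => hwnotspan₂ (h ▸ hwspan))
      exact lt_of_lt_of_le (Submodule.finrank_lt_finrank_of_lt hlt) hrank
    obtain ⟨c₂, hc₂, hz₁eq⟩ := ih _ hrank₂ z₁ hz₁D le_rfl
    -- combine
    set β : ℝ := 1 - t₁ * s₁ with hβ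
    have hkey : β • w = w₁ + (-t₁) • z₁ := by
      rw [hw₁def, hz₁def, hβ]
      module
    have hts01 : 0 ≤ t₁ * s₁ := by
      have := mul_nonneg (neg_nonneg.mpr (le_of_lt ht₁neg)) (neg_nonneg.mpr hs₁nonpos)
      rwa [neg_mul_neg] at this
    rcases lt_trichotomy β 0 with hβ0 | hβ0 | hβ0
    · exfalso
      have hnegw : ∀ a, 0 ≤ v a ⬝ᵥ (-w) := by
        intro a
        have h1 : v a ⬝ᵥ (β • w) = v a ⬝ᵥ w₁ + (-t₁) * (v a ⬝ᵥ z₁) := by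
          rw [hkey, dotProduct_add, dotProduct_smul, smul_eq_mul]
        rw [dotProduct_smul, smul_eq_mul] at h1
        have h2 : 0 ≤ v a ⬝ᵥ w₁ + (-t₁) * (v a ⬝ᵥ z₁) :=
          add_nonneg (hw₁D a) (mul_nonneg (by linarith) (hz₁D a))
        rw [dotProduct_neg]
        nlinarith
      exact hw0 (hpt w hw hnegw)
    · exfalso
      have hzero : w₁ + (-t₁) • z₁ = 0 := by rw [← hkey, hβ0, zero_smul]
      have hnegw₁ : ∀ a, 0 ≤ v a ⬝ᵥ (-w₁) := by
        intro a
        have he : -w₁ = (-t₁) • z₁ := (eq_neg_of_add_eq_zero_right hzero).symm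
        rw [he, dotProduct_smul, smul_eq_mul]
        exact mul_nonneg (by linarith) (hz₁D a)
      have hw₁0 : w₁ = 0 := hpt w₁ hw₁D hnegw₁
      have hz₁0 : z₁ = 0 := by
        have : (-t₁) • z₁ = 0 := by
          have := hzero; rw [hw₁0, zero_add] at this; exact this
        rcases smul_eq_zero.mp this with h | h
        · exfalso; linarith
        · exact h
      have hzw : z = (-s₁) • w := by
        have h0 : z + s₁ • w = 0 := by rw [← hz₁def]; exact hz₁0
        rw [eq_neg_of_add_eq_zero_left h0, neg_smul]
      exact hznot (-s₁) hzw
    · have hβne : β ≠ 0 := ne_of_gt hβ0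
      refine ⟨fun j => (1/β) * c₁ j + ((1/β) * (-t₁)) * c₂ j, ?_, ?_⟩
      · intro j
        have hb : 0 ≤ 1/β := by positivity
        have h1 : 0 ≤ (1/β) * c₁ j := mul_nonneg hb (hc₁ j)
        have h2 : 0 ≤ ((1/β) * (-t₁)) * c₂ j :=
          mul_nonneg (mul_nonneg hb (by linarith)) (hc₂ j)
        linarith
      · have hweq : w = (1/β) • w₁ + ((1/β) * (-t₁)) • z₁ := by
          have := congrArg (fun u => (1/β) • u) hkey
          simp only [smul_add, smul_smul] at this
          rw [one_div, inv_mul_cancel₀ hβne, one_smul] at this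
          rw [this, one_div]
        rw [hweq, hw₁eq, hz₁eq, Finset.smul_sum, Finset.smul_sum, ← Finset.sum_add_distrib]
        apply Finset.sum_congr rfl
        intro j _
        rw [add_smul, smul_smul, smul_smul]


lemma exists_eps {n : ℕ} (g h : Fin n → ℝ) (hg : ∀ j, 0 ≤ g j)
    (hzero : ∀ j, g j = 0 → h j = 0) :
    ∃ ε : ℝ, 0 < ε ∧ ∀ j, ε * |h j| ≤ g j := by
  classical
  by_cases hS : (Finset.univ.filter (fun j : Fin n => h j ≠ 0)).Nonempty
  · set S := Finset.univ.filter (fun j : Fin n => h j ≠ 0) with hSdef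
    have hgpos : ∀ j ∈ S, 0 < g j := by
      intro j hj
      have hj' : h j ≠ 0 := (Finset.mem_filter.mp hj).2
      rcases lt_or_eq_of_le (hg j) with h | h
      · exact h
      · exact absurd (hzero j h.symm) hj'
    refine ⟨S.inf' hS (fun j => g j / |h j|), ?_, ?_⟩
    · rw [Finset.lt_inf'_iff]
      intro j hj
      have hj' : h j ≠ 0 := (Finset.mem_filter.mp hj).2
      exact div_pos (hgpos j hj) (abs_pos.mpr hj')
    · intro j
      by_cases hj : h j = 0
      · simp [hj, hg j]
      · have hjS : j ∈ S := Finset.mem_filter.mpr ⟨Finset.mem_univ j, hj⟩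
        have hle : S.inf' hS (fun j => g j / |h j|) ≤ g j / |h j| :=
          Finset.inf'_le _ hjS
        rw [← le_div_iff₀ (abs_pos.mpr hj)]
        exact hle
  · refine ⟨1, one_pos, ?_⟩
    intro j
    rw [Finset.not_nonempty_iff_eq_empty, Finset.filter_eq_empty_iff] at hS
    have : h j = 0 := by
      have := hS (Finset.mem_univ j); push_neg at this; exact this
    simp [this, hg j]

lemma mulVec_inj_of_rank {n d : ℕ} (X : Matrix (Fin n) (Fin d) ℝ) (hXrank : X.rank = d) :
    ∀ z : Fin d → ℝ, X *ᵥ z = 0 → z = 0 := by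
  intro z hz
  have hrn := LinearMap.finrank_range_add_finrank_ker X.mulVecLin
  rw [Module.finrank_fin_fun] at hrn
  have hrank' : Module.finrank ℝ (LinearMap.range X.mulVecLin) = d := hXrank
  have hker0 : Module.finrank ℝ (LinearMap.ker X.mulVecLin) = 0 := by omega
  have hkerbot : LinearMap.ker X.mulVecLin = ⊥ := Submodule.finrank_eq_zero.mp hker0
  have hzker : z ∈ LinearMap.ker X.mulVecLin := by
    rw [LinearMap.mem_ker, Matrix.mulVecLin_apply]; exact hz
  rw [hkerbot, Submodule.mem_bot] at hzker
  exact hzker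

lemma vecMul_surj_of_rank {n d : ℕ} (X : Matrix (Fin n) (Fin d) ℝ) (hXrank : X.rank = d) :
    ∀ z : Fin d → ℝ, ∃ c : Fin n → ℝ, Xᵀ *ᵥ c = z := by
  intro z
  have h1 : Module.finrank ℝ (LinearMap.range Xᵀ.mulVecLin) = d := by
    have : Xᵀ.rank = d := by rw [Matrix.rank_transpose]; exact hXrank
    exact this
  have h2 : LinearMap.range Xᵀ.mulVecLin = ⊤ := by
    apply Submodule.eq_top_of_finrank_eq
    rw [h1, Module.finrank_fin_fun]
  have hz : z ∈ LinearMap.range Xᵀ.mulVecLin := by rw [h2]; trivial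
  obtain ⟨c, hc⟩ := hz
  exact ⟨c, hc⟩

/-- Let `A = X Xᵀ` (with `rank X = d`) be an `n×n` slack matrix of a
pointed full-dimensional polyhedral cone in `ℝ^d`. If a symmetric matrix `B` lies in
`W₁ = {X Q Xᵀ : Q ∈ 𝒮^d}` and in `W₂ = {Y ∈ 𝒮^n : Y i j = 0 whenever A i j = 0}`, then
every row of `B` is a scalar multiple of the corresponding row of `A`. -/
theorem rows_multiple_of_mem_W1_inter_W2
    {d n : ℕ} (K : Set (Fin d → ℝ))
    (hpoly : IsPolyhedralCone K) (hpointed : K ∩ (-K) = {0})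
    (hfull : Submodule.span ℝ K = ⊤)
    (A : Matrix (Fin n) (Fin n) ℝ) (hslack : IsSlackMatrix A K)
    (X : Matrix (Fin n) (Fin d) ℝ) (hfact : A = X * Xᵀ) (hXrank : X.rank = d)
    (B : Matrix (Fin n) (Fin n) ℝ) (hBsymm : B.IsSymm)
    (hW1 : ∃ Q : Matrix (Fin d) (Fin d) ℝ, Q.IsSymm ∧ B = X * Q * Xᵀ)
    (hW2 : ∀ i j, A i j = 0 → B i j = 0) :
    ∀ i, ∃ lam : ℝ, B i = lam • A i := by
  obtain ⟨m₀, v, hK⟩ := hpoly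
  have hK' : K = coneGenBy v := hK
  obtain ⟨x, y, hx, hy, hA⟩ := hslack
  obtain ⟨Q, hQ, hB⟩ := hW1
  -- entrywise formulas
  have hAX : ∀ i j, A i j = X i ⬝ᵥ X j := by
    intro i j
    rw [hfact]
    simp [Matrix.mul_apply, dotProduct, Matrix.transpose_apply]
  have hxiyj : ∀ a j, x a ⬝ᵥ y j = X a ⬝ᵥ X j := fun a j => (hA a j).symm.trans (hAX a j)
  -- dual cone description
  have hDchar : eucDual K = {w | ∀ a, 0 ≤ v a ⬝ᵥ w} := by
    rw [hK']; exact eucDual_coneGenBy v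
  -- pointedness of the dual cone
  have hpt : ∀ w : Fin d → ℝ, (∀ a, 0 ≤ v a ⬝ᵥ w) → (∀ a, 0 ≤ v a ⬝ᵥ (-w)) → w = 0 := by
    intro w h1 h2
    have hz : ∀ a, v a ⬝ᵥ w = 0 := by
      intro a
      have := h2 a
      rw [dotProduct_neg] at this
      linarith [h1 a]
    have hKker : K ⊆ (LinearMap.ker (dotL w) : Set (Fin d → ℝ)) := by
      rw [hK']
      rintro u ⟨c, hc, rfl⟩
      rw [SetLike.mem_coe, LinearMap.mem_ker]
      show w ⬝ᵥ (∑ a, c a • v a) = 0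
      rw [dotProduct_comm, sum_dotProduct'']
      apply Finset.sum_eq_zero
      intro a _
      rw [smul_dotProduct, hz a, smul_zero]
    have hspan : Submodule.span ℝ K ≤ LinearMap.ker (dotL w) := Submodule.span_le.mpr hKker
    rw [hfull] at hspan
    have : w ⬝ᵥ w = 0 := LinearMap.mem_ker.mp (hspan Submodule.mem_top)
    exact dotProduct_self_eq_zero.mp this
  -- extreme ray covering of the dual cone
  have hcov : ∀ r, IsExtremeRayGen {w | ∀ a, 0 ≤ v a ⬝ᵥ w} r →
      ∃ j, ∃ c : ℝ, 0 < c ∧ r = c • y j := by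
    intro r hr
    exact hy.2.2 r (by rwa [hDchar])
  -- H1 : the cone dual to the y's is contained in K
  have H1 : ∀ u : Fin d → ℝ, (∀ j, 0 ≤ u ⬝ᵥ y j) → u ∈ K := by
    intro u hu
    have hbip : ∀ yv : Fin d → ℝ, (∀ a, 0 ≤ v a ⬝ᵥ yv) → 0 ≤ u ⬝ᵥ yv := by
      intro yv hyv
      obtain ⟨c, hc, hyveq⟩ := minkowski v y hpt hcov _ yv hyv le_rfl
      rw [hyveq, dotProduct_comm, sum_dotProduct'']
      apply Finset.sum_nonneg
      intro j _
      rw [smul_dotProduct, smul_eq_mul, dotProduct_comm]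
      exact mul_nonneg (hc j) (hu j)
    rw [hK']
    exact farkas_mem v u hbip
  -- rank consequences
  have hinj := mulVec_inj_of_rank X hXrank
  have hsurj := vecMul_surj_of_rank X hXrank
  -- main argument
  intro i
  by_cases hXi : X i = 0
  · refine ⟨0, ?_⟩
    funext j
    have hAij : A i j = 0 := by rw [hAX, hXi, zero_dotProduct]
    have hBij : B i j = 0 := hW2 i j hAij
    simp [hBij]
  · set u : Fin d → ℝ := Matrix.vecMul (X i) Q with hu
    have hBu : ∀ j, B i j = u ⬝ᵥ X j := by
      intro j
      rw [hB, hu]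
      simp [Matrix.mul_apply, dotProduct, Matrix.transpose_apply, Matrix.vecMul, Finset.sum_mul]
    have hAii : 0 < X i ⬝ᵥ X i := by
      rcases lt_or_eq_of_le (Fintype.sum_nonneg (fun k => mul_self_nonneg (X i k)) :
        (0:ℝ) ≤ X i ⬝ᵥ X i) with h | h
      · exact h
      · exact absurd (dotProduct_self_eq_zero.mp h.symm) hXi
    set lam : ℝ := (u ⬝ᵥ X i) / (X i ⬝ᵥ X i) with hlam
    set z : Fin d → ℝ := u - lam • X i with hz
    have hzi : z ⬝ᵥ X i = 0 := by
      rw [hz, sub_dotProduct, smul_dotProduct, smul_eq_mul, hlam]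
      field_simp
      ring
    have hzt : ∀ j, X i ⬝ᵥ X j = 0 → z ⬝ᵥ X j = 0 := by
      intro j hj
      have hAij : A i j = 0 := by rw [hAX]; exact hj
      have hBij : B i j = 0 := hW2 i j hAij
      rw [hz, sub_dotProduct, smul_dotProduct, smul_eq_mul, hj, mul_zero, sub_zero,
        ← hBu, hBij]
    obtain ⟨c, hc⟩ := hsurj z
    set ζ : Fin d → ℝ := ∑ a, c a • x a with hζ
    have hXt : Xᵀ *ᵥ c = ∑ a, c a • X a := by
      funext k
      rw [Matrix.mulVec, Finset.sum_apply]
      simp [dotProduct, Matrix.transpose_apply, mul_comm]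
    have hζy : ∀ j, ζ ⬝ᵥ y j = z ⬝ᵥ X j := by
      intro j
      rw [hζ, sum_dotProduct'', ← hc, hXt, sum_dotProduct'']
      apply Finset.sum_congr rfl
      intro a _
      rw [smul_dotProduct, smul_dotProduct, hxiyj]
    -- the tight dual generators kill ζ
    have hg0 : ∀ j, 0 ≤ x i ⬝ᵥ y j := by
      intro j
      have hyj : y j ∈ eucDual K := (hy.1 j).2.1
      exact hyj (x i) (hx.1 i).2.1
    have hh0 : ∀ j, x i ⬝ᵥ y j = 0 → ζ ⬝ᵥ y j = 0 := by
      intro j hgj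
      rw [hζy]
      exact hzt j ((hxiyj i j).symm.trans hgj)
    obtain ⟨ε, hεpos, hεle⟩ := exists_eps (fun j => x i ⬝ᵥ y j) (fun j => ζ ⬝ᵥ y j) hg0 hh0
    have hmemp : x i + ε • ζ ∈ K := by
      apply H1
      intro j
      rw [add_dotProduct, smul_dotProduct, smul_eq_mul]
      have h1 := hεle j
      have h2 : -|ζ ⬝ᵥ y j| ≤ ζ ⬝ᵥ y j := neg_abs_le _
      nlinarith
    have hmemm : x i - ε • ζ ∈ K := by
      apply H1
      intro j
      rw [sub_dotProduct, smul_dotProduct, smul_eq_mul]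
      have h1 := hεle j
      have h2 : ζ ⬝ᵥ y j ≤ |ζ ⬝ᵥ y j| := le_abs_self _
      nlinarith
    have hsum2 : (x i + ε • ζ) + (x i - ε • ζ) = (2:ℝ) • x i := by module
    obtain ⟨⟨a, ha0, haeq⟩, -⟩ :=
      (hx.1 i).2.2 _ hmemp _ hmemm ⟨2, by norm_num, hsum2⟩
    have hζyi : ζ ⬝ᵥ y i = 0 := by rw [hζy]; exact hzi
    have hgipos : 0 < x i ⬝ᵥ y i := by rw [hxiyj]; exact hAii
    have ha1 : a = 1 := by
      have := congrArg (fun w => w ⬝ᵥ y i) haeq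
      simp only [add_dotProduct, smul_dotProduct, smul_eq_mul] at this
      rw [hζyi, mul_zero, add_zero] at this
      have : x i ⬝ᵥ y i = a * (x i ⬝ᵥ y i) := this
      nlinarith
    have hζ0 : ζ = 0 := by
      have : x i + ε • ζ = x i := by rw [haeq, ha1, one_smul]
      have hε0 : ε • ζ = 0 := by
        have := congrArg (fun w => w - x i) this
        simpa [add_sub_cancel_left] using this
      rcases smul_eq_zero.mp hε0 with h | h
      · exact absurd h (ne_of_gt hεpos)
      · exact h
    have hz0 : z = 0 := by
      apply hinj
      funext j
      have hzXj : z ⬝ᵥ X j = 0 := by rw [← hζy, hζ0, zero_dotProduct]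
      show X j ⬝ᵥ z = 0
      rw [dotProduct_comm]
      exact hzXj
    have huX : u = lam • X i := by
      have := congrArg (fun w => w + lam • X i) hz0
      simpa [hz, sub_add_cancel] using this
    refine ⟨lam, ?_⟩
    funext j
    rw [Pi.smul_apply, smul_eq_mul, hBu, huX, smul_dotProduct, smul_eq_mul, hAX]
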